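/- (Key algebraic computation in the proof of Theorem 2.15) Let W be a 3-dimensional linear subspace of ℝ⁷, let π denote the orthogonal projection of ℝ⁷ onto W^⊥, and let π^T = id − π. Fix V ∈ W and define the trilinear map T : (ℝ⁷)³ → ℝ by T(X,Y,Z) = ⟨V,Z⟩⟨V×Y, πX⟩ − ⟨V,Y⟩⟨V×Z, πX⟩ + ⟨V,X⟩⟨V×Z, πY⟩ − ⟨V,Z⟩⟨V×X, πY⟩ + ⟨V,Y⟩⟨V×X, πZ⟩ − ⟨V,X⟩⟨V×Y, πZ⟩. Then for every orthonormal basis {g₁,g₂,g₃} of W: (1/6) Σ_{m,n=1}^7 T( 2π^T(e_m×e_n) − π(e_m×e_n), e_m, e_n ) = − Σ_{a=1}^3 ‖π(V×g_a)‖². -/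

import Mathlib

open scoped RealInnerProductSpace

noncomputable section

abbrev E7 : Type := EuclideanSpace ℝ (Fin 7)

/-- The standard orthonormal basis vectors of ℝ⁷. -/
def e7 (i : Fin 7) : E7 := EuclideanSpace.single i 1

/-- Kronecker delta. -/
def kd7 (i j : Fin 7) : ℝ := if i = j then 1 else 0

/-- `e^{abc}(e_i, e_j, e_k)` : component of a wedge of three dual basis covectors. -/
def trip7 (a b c i j k : Fin 7) : ℝ :=
  Matrix.det !![kd7 a i, kd7 a j, kd7 a k;
                kd7 b i, kd7 b j, kd7 b k;
                kd7 c i, kd7 c j, kd7 c k]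

/-- `e^{abcd}(e_i, e_j, e_k, e_l)` : component of a wedge of four dual basis covectors. -/
def quad7 (a b c d i j k l : Fin 7) : ℝ :=
  Matrix.det !![kd7 a i, kd7 a j, kd7 a k, kd7 a l;
                kd7 b i, kd7 b j, kd7 b k, kd7 b l;
                kd7 c i, kd7 c j, kd7 c k, kd7 c l;
                kd7 d i, kd7 d j, kd7 d k, kd7 d l]

/-- Components `φ_{ijk}` of the standard G₂ 3-form
`φ = e¹²³ + e¹⁴⁵ − e¹⁶⁷ + e²⁴⁶ − e²⁷⁵ + e³⁴⁷ − e³⁵⁶` (indices shifted to be 0-based). -/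
def phiC (i j k : Fin 7) : ℝ :=
  trip7 0 1 2 i j k + trip7 0 3 4 i j k - trip7 0 5 6 i j k
  + trip7 1 3 5 i j k - trip7 1 6 4 i j k + trip7 2 3 6 i j k - trip7 2 4 5 i j k

/-- Components `ψ_{ijkl}` of the Hodge dual 4-form
`ψ = e⁴⁵⁶⁷ − e²³⁴⁵ + e²³⁶⁷ − e³¹⁴⁶ + e³¹⁷⁵ − e¹²⁴⁷ + e¹²⁵⁶` (0-based). -/
def psiC (i j k l : Fin 7) : ℝ :=
  quad7 3 4 5 6 i j k l - quad7 1 2 3 4 i j k l + quad7 1 2 5 6 i j k l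
  - quad7 2 0 3 5 i j k l + quad7 2 0 6 4 i j k l
  - quad7 0 1 3 6 i j k l + quad7 0 1 4 5 i j k l

/-- The standard G₂ 3-form evaluated on arbitrary vectors. -/
def phi7 (x y z : E7) : ℝ := ∑ i, ∑ j, ∑ k, x i * y j * z k * phiC i j k

/-- The 4-form ψ evaluated on arbitrary vectors. -/
def psi7 (x y z w : E7) : ℝ :=
  ∑ i, ∑ j, ∑ k, ∑ l, x i * y j * z k * w l * psiC i j k l

/-- The cross product on ℝ⁷, characterized by `⟨x × y, z⟩ = φ(x,y,z)`. -/
def cross7 (x y : E7) : E7 := (WithLp.equiv 2 (Fin 7 → ℝ)).symm fun k => phi7 x y (e7 k)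

/-- The vector-valued 3-form χ, characterized by `⟨χ(x,y,z), w⟩ = ψ(x,y,z,w)`. -/
def chi7 (x y z : E7) : E7 := (WithLp.equiv 2 (Fin 7 → ℝ)).symm fun l => psi7 x y z (e7 l)

/-- Orthogonal projection `π` of ℝ⁷ onto `Wᗮ`. -/
def projPerp (W : Submodule ℝ E7) (x : E7) : E7 := (Submodule.orthogonalProjectionOnto Wᗮ x : E7)

/-- Tangential projection `π^T = id − π`. -/
def projTan (W : Submodule ℝ E7) (x : E7) : E7 := x - projPerp W x

/-- The trilinear map `T` built from `V` and the projection `pr = π`: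
`T(X,Y,Z) = ⟨V,Z⟩⟨V×Y, πX⟩ − ⟨V,Y⟩⟨V×Z, πX⟩ + ⟨V,X⟩⟨V×Z, πY⟩ − ⟨V,Z⟩⟨V×X, πY⟩
  + ⟨V,Y⟩⟨V×X, πZ⟩ − ⟨V,X⟩⟨V×Y, πZ⟩`. -/
def Tform (V : E7) (pr : E7 → E7) (X Y Z : E7) : ℝ :=
  ⟪V, Z⟫ * ⟪cross7 V Y, pr X⟫ - ⟪V, Y⟫ * ⟪cross7 V Z, pr X⟫
  + ⟪V, X⟫ * ⟪cross7 V Z, pr Y⟫ - ⟪V, Z⟫ * ⟪cross7 V X, pr Y⟫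
  + ⟪V, Y⟫ * ⟪cross7 V X, pr Z⟫ - ⟪V, X⟫ * ⟪cross7 V Y, pr Z⟫


lemma inner7 (x y : E7) : ⟪x, y⟫ = ∑ i, x i * y i := by
  simp [PiLp.inner_apply, RCLike.inner_apply, mul_comm]

lemma e7_apply (i j : Fin 7) : e7 i j = if i = j then 1 else 0 := by
  simp [e7, EuclideanSpace.single_apply, eq_comm]

lemma cross7_apply (x y : E7) (k : Fin 7) :
    cross7 x y k = ∑ i, ∑ j, x i * y j * phiC i j k := by
  show phi7 x y (e7 k) = _
  unfold phi7
  refine Finset.sum_congr rfl fun i _ => Finset.sum_congr rfl fun j _ => ?_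
  rw [Finset.sum_eq_single k]
  · simp [e7_apply]
  · intro b _ hb; simp [e7_apply, hb.symm]  -- e7 k b = if k = b
  · simp

section crosstable
variable (x y : E7)
set_option maxHeartbeats 1000000 in
lemma cross7_0 : cross7 x y 0 = (x 1 * y 2 - x 2 * y 1) + (x 3 * y 4 - x 4 * y 3) - (x 5 * y 6 - x 6 * y 5) := by
  rw [cross7_apply]; simp only [Fin.sum_univ_seven]
  simp [phiC, trip7, kd7, Matrix.det_fin_three, Matrix.vecHead, Matrix.vecTail]; ring
set_option maxHeartbeats 1000000 in
lemma cross7_1 : cross7 x y 1 = -(x 0 * y 2 - x 2 * y 0) + (x 3 * y 5 - x 5 * y 3) + (x 4 * y 6 - x 6 * y 4) := by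
  rw [cross7_apply]; simp only [Fin.sum_univ_seven]
  simp [phiC, trip7, kd7, Matrix.det_fin_three, Matrix.vecHead, Matrix.vecTail]; ring
set_option maxHeartbeats 1000000 in
lemma cross7_2 : cross7 x y 2 = (x 0 * y 1 - x 1 * y 0) + (x 3 * y 6 - x 6 * y 3) - (x 4 * y 5 - x 5 * y 4) := by
  rw [cross7_apply]; simp only [Fin.sum_univ_seven]
  simp [phiC, trip7, kd7, Matrix.det_fin_three, Matrix.vecHead, Matrix.vecTail]; ring
set_option maxHeartbeats 1000000 in
lemma cross7_3 : cross7 x y 3 = -(x 0 * y 4 - x 4 * y 0) - (x 1 * y 5 - x 5 * y 1) - (x 2 * y 6 - x 6 * y 2) := by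
  rw [cross7_apply]; simp only [Fin.sum_univ_seven]
  simp [phiC, trip7, kd7, Matrix.det_fin_three, Matrix.vecHead, Matrix.vecTail]; ring
set_option maxHeartbeats 1000000 in
lemma cross7_4 : cross7 x y 4 = (x 0 * y 3 - x 3 * y 0) - (x 1 * y 6 - x 6 * y 1) + (x 2 * y 5 - x 5 * y 2) := by
  rw [cross7_apply]; simp only [Fin.sum_univ_seven]
  simp [phiC, trip7, kd7, Matrix.det_fin_three, Matrix.vecHead, Matrix.vecTail]; ring
set_option maxHeartbeats 1000000 in
lemma cross7_5 : cross7 x y 5 = (x 0 * y 6 - x 6 * y 0) + (x 1 * y 3 - x 3 * y 1) - (x 2 * y 4 - x 4 * y 2) := by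
  rw [cross7_apply]; simp only [Fin.sum_univ_seven]
  simp [phiC, trip7, kd7, Matrix.det_fin_three, Matrix.vecHead, Matrix.vecTail]; ring
set_option maxHeartbeats 1000000 in
lemma cross7_6 : cross7 x y 6 = -(x 0 * y 5 - x 5 * y 0) + (x 1 * y 4 - x 4 * y 1) + (x 2 * y 3 - x 3 * y 2) := by
  rw [cross7_apply]; simp only [Fin.sum_univ_seven]
  simp [phiC, trip7, kd7, Matrix.det_fin_three, Matrix.vecHead, Matrix.vecTail]; ring
end crosstable

lemma e7ext {x y : E7} (h : ∀ z : E7, ⟪x, z⟫ = ⟪y, z⟫) : x = y := by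
  exact ext_inner_right ℝ fun v => h v

lemma cross7_skew (x y : E7) : cross7 x y = - cross7 y x := by
  refine e7ext fun z => ?_
  rw [inner_neg_left, inner7, inner7]
  simp only [Fin.sum_univ_seven, cross7_0, cross7_1, cross7_2, cross7_3, cross7_4, cross7_5, cross7_6]
  ring

lemma inner_cross_left (x y z : E7) : ⟪x, cross7 y z⟫ = ⟪cross7 x y, z⟫ := by
  rw [inner7, inner7]
  simp only [Fin.sum_univ_seven, cross7_0, cross7_1, cross7_2, cross7_3, cross7_4, cross7_5, cross7_6]
  ring

lemma inner_cross_swap (x y z : E7) : ⟪cross7 x y, z⟫ = -⟪cross7 x z, y⟫ := by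
  rw [inner7, inner7]
  simp only [Fin.sum_univ_seven, cross7_0, cross7_1, cross7_2, cross7_3, cross7_4, cross7_5, cross7_6]
  ring

lemma cross7_double (x w : E7) : cross7 x (cross7 x w) = ⟪x,w⟫ • x - ⟪x,x⟫ • w := by
  refine e7ext fun z => ?_
  rw [inner_sub_left, real_inner_smul_left, real_inner_smul_left]
  simp only [inner7, Fin.sum_univ_seven, cross7_0, cross7_1, cross7_2, cross7_3, cross7_4, cross7_5, cross7_6]
  ring

lemma cross7_norm (x y : E7) : ⟪cross7 x y, cross7 x y⟫ = ⟪x,x⟫ * ⟪y,y⟫ - ⟪x,y⟫^2 := by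
  simp only [inner7, Fin.sum_univ_seven, cross7_0, cross7_1, cross7_2, cross7_3, cross7_4, cross7_5, cross7_6]
  ring

-- linearity of cross7 in each argument, as a bilinear map would give; we need right-linearity mostly
lemma cross7_add_right (x y z : E7) : cross7 x (y + z) = cross7 x y + cross7 x z := by
  refine e7ext fun v => ?_
  rw [inner_add_left]
  simp only [inner7, Fin.sum_univ_seven, cross7_0, cross7_1, cross7_2, cross7_3, cross7_4, cross7_5, cross7_6,
    PiLp.add_apply]
  ring

lemma cross7_smul_right (r : ℝ) (x y : E7) : cross7 x (r • y) = r • cross7 x y := by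
  refine e7ext fun v => ?_
  rw [real_inner_smul_left]
  simp only [inner7, Fin.sum_univ_seven, cross7_0, cross7_1, cross7_2, cross7_3, cross7_4, cross7_5, cross7_6,
    PiLp.smul_apply, smul_eq_mul]
  ring

def crossL (x : E7) : E7 →ₗ[ℝ] E7 where
  toFun := cross7 x
  map_add' := cross7_add_right x
  map_smul' := fun r y => cross7_smul_right r x y

lemma crossL_apply (x y : E7) : crossL x y = cross7 x y := rfl

def perpL (W : Submodule ℝ E7) : E7 →ₗ[ℝ] E7 :=
  Wᗮ.subtype.comp (Submodule.orthogonalProjectionOnto Wᗮ).toLinearMap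

lemma projPerp_eq (W : Submodule ℝ E7) (x : E7) : projPerp W x = perpL W x := rfl

lemma perpL_idem (W : Submodule ℝ E7) (x : E7) : perpL W (perpL W x) = perpL W x := by
  show ((Submodule.orthogonalProjectionOnto Wᗮ ((Submodule.orthogonalProjectionOnto Wᗮ x : E7)) : E7)) = _
  rw [show ((Submodule.orthogonalProjectionOnto Wᗮ ((Submodule.orthogonalProjectionOnto Wᗮ x : E7)) : E7)) = _ from
    Submodule.starProjection_eq_self_iff.mpr (SetLike.coe_mem _)]
  rfl

lemma perpL_sym (W : Submodule ℝ E7) (x y : E7) : ⟪perpL W x, y⟫ = ⟪x, perpL W y⟫ :=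
  Submodule.inner_starProjection_left_eq_right _ x y

-- basic e7 lemmas
lemma inner_e7r (x : E7) (n : Fin 7) : ⟪x, e7 n⟫ = x n := by
  rw [inner7, Finset.sum_eq_single n] <;> simp [e7_apply] <;> intros <;> simp_all [e7_apply]

lemma inner_e7l (x : E7) (n : Fin 7) : ⟪e7 n, x⟫ = x n := by
  rw [real_inner_comm]; exact inner_e7r x n

lemma sum_e7 (x : E7) : ∑ n, x n • e7 n = x := by
  refine e7ext fun z => ?_
  rw [sum_inner]
  simp only [real_inner_smul_left, inner_e7l]
  rw [inner7]

section ctx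
variable (W : Submodule ℝ E7) (V : E7) (hV : V ∈ W)
  (g : Fin 3 → E7) (hg : Orthonormal ℝ g) (hgW : ∀ a, g a ∈ W)
  (hspan : Submodule.span ℝ (Set.range g) = W)

include hg hgW hspan in
lemma perpL_formula (x : E7) : perpL W x = x - ∑ a, ⟪x, g a⟫ • g a := by
  show ((Submodule.orthogonalProjectionOnto Wᗮ x : E7)) = _
  refine Submodule.eq_starProjection_of_mem_of_inner_eq_zero ?_ ?_
  · -- x - ∑ ∈ Wᗮ
    rw [Submodule.mem_orthogonal']
    intro u hu
    rw [← hspan] at hu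
    induction hu using Submodule.span_induction with
    | mem u hu =>
        obtain ⟨b, rfl⟩ := hu
        rw [inner_sub_left, sum_inner]
        simp only [real_inner_smul_left]
        rw [Finset.sum_eq_single b]
        · rw [orthonormal_iff_ite] at hg
          rw [hg b b]; simp
        · intro a _ hab
          rw [orthonormal_iff_ite] at hg
          rw [hg a b]; simp [hab]
        · simp
    | zero => simp
    | add u v _ _ h1 h2 => rw [inner_add_right, h1, h2]; ring
    | smul c u _ h1 => rw [inner_smul_right, h1]; simp
  · intro w hw
    have hmem : x - (x - ∑ a, ⟪x, g a⟫ • g a) ∈ W := by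
      simp only [sub_sub_cancel]
      exact Submodule.sum_mem _ fun a _ => Submodule.smul_mem _ _ (hgW a)
    rw [real_inner_comm]
    exact (Submodule.mem_orthogonal Wᗮ _).mp (W.le_orthogonal_orthogonal hmem) w hw

include hV in
lemma perpL_V_eq_zero : perpL W V = 0 := by
  show ((Submodule.orthogonalProjectionOnto Wᗮ V : E7)) = 0
  rw [Submodule.orthogonalProjectionOnto_eq_zero_iff.mpr (W.le_orthogonal_orthogonal hV)]
  rfl

end ctx

-- sum contraction helpers
lemma inner_L_sum (u : E7) (L : E7 →ₗ[ℝ] E7) (c : Fin 7 → ℝ) (f : Fin 7 → E7) :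
    ∑ n, c n * ⟪u, L (f n)⟫ = ⟪u, L (∑ n, c n • f n)⟫ := by
  rw [map_sum, inner_sum]
  exact Finset.sum_congr rfl fun n _ => by rw [map_smul, real_inner_smul_right]

lemma sum_inner_L (w : E7) (c : Fin 7 → ℝ) (f : Fin 7 → E7) :
    ∑ n, c n * ⟪f n, w⟫ = ⟪∑ n, c n • f n, w⟫ := by
  rw [sum_inner]
  exact Finset.sum_congr rfl fun n _ => by rw [real_inner_smul_left]

lemma contract_r (x y : E7) : ∑ n, x n • cross7 y (e7 n) = cross7 y x := by
  have h : ∑ n, x n • cross7 y (e7 n) = crossL y (∑ n, x n • e7 n) := by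
    rw [map_sum]
    exact (Finset.sum_congr rfl fun n _ => by rw [map_smul]; rfl).symm
  rw [h, sum_e7]; rfl

lemma contract_l (x y : E7) : ∑ m, x m • cross7 (e7 m) y = cross7 x y := by
  have h : ∀ m, x m • cross7 (e7 m) y = -(x m • cross7 y (e7 m)) := by
    intro m; rw [cross7_skew (e7 m) y]; simp
  simp only [h, Finset.sum_neg_distrib, contract_r, cross7_skew y x]
  simp

lemma cross7_neg_right (x y : E7) : cross7 x (-y) = -cross7 x y := by
  show crossL x (-y) = -(crossL x y)
  exact map_neg (crossL x) y

lemma e7_self (m : Fin 7) : e7 m m = 1 := by rw [e7_apply]; simp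

lemma e7_norm (m : Fin 7) : ⟪e7 m, e7 m⟫ = (1:ℝ) := by
  rw [inner_e7r, e7_apply]; simp


/-- Key algebraic computation in the proof of Theorem 2.15. -/
theorem key_computation_assoc (W : Submodule ℝ E7) (hW : Module.finrank ℝ W = 3)
    (V : E7) (hV : V ∈ W)
    (g : Fin 3 → E7) (hg : Orthonormal ℝ g) (hgW : ∀ a, g a ∈ W)
    (hspan : Submodule.span ℝ (Set.range g) = W) :
    (1/6 : ℝ) * ∑ m : Fin 7, ∑ n : Fin 7,
        Tform V (projPerp W)
          ((2 : ℝ) • projTan W (cross7 (e7 m) (e7 n)) - projPerp W (cross7 (e7 m) (e7 n)))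
          (e7 m) (e7 n)
      = - ∑ a : Fin 3, ‖projPerp W (cross7 V (g a))‖ ^ 2 := by
  have hL1 : ∀ x, perpL W x = x - ∑ a, ⟪x, g a⟫ • g a := perpL_formula W g hg hgW hspan
  have hπV : perpL W V = 0 := perpL_V_eq_zero W V hV
  have hgg : ∀ a b, ⟪g a, g b⟫ = if a = b then (1:ℝ) else 0 := orthonormal_iff_ite.mp hg
  have hπ0 : ∀ u : E7, ⟪V, perpL W u⟫ = 0 := fun u => by rw [← perpL_sym, hπV, inner_zero_left]
  -- V expansion
  have hVexp : V = ∑ a, ⟪V, g a⟫ • g a := by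
    have h := hL1 V; rw [hπV] at h; linear_combination (norm := module) -h
  have hVV : ∑ a, ⟪V, g a⟫ * ⟪V, g a⟫ = ⟪V, V⟫ := by
    nth_rewrite 4 [hVexp]
    rw [inner_sum]
    simp only [real_inner_smul_right]
  -- trace of π
  have htr : ∑ m, ⟪e7 m, perpL W (e7 m)⟫ = (4:ℝ) := by
    have h1 : ∀ m, ⟪e7 m, perpL W (e7 m)⟫ = 1 - ∑ a, g a m * g a m := by
      intro m
      simp only [hL1, inner_sub_right, inner_sum, real_inner_smul_right, inner_e7l, e7_self]
    simp only [h1]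
    rw [Finset.sum_sub_distrib, Finset.sum_comm]
    have h2 : ∀ a : Fin 3, ∑ m, g a m * g a m = 1 := by
      intro a; rw [← inner7, hgg a a]; simp
    simp only [h2, Finset.sum_const, Finset.card_univ, Fintype.card_fin, nsmul_eq_mul]
    norm_num
  -- hQ
  have hQ : ∑ m, ⟪cross7 V (e7 m), perpL W (cross7 V (e7 m))⟫ = 4 * ⟪V, V⟫ := by
    have h1 : ∀ m, ⟪cross7 V (e7 m), perpL W (cross7 V (e7 m))⟫
        = (⟪V,V⟫ - V m * V m) - ∑ a, (cross7 V (g a)) m * (cross7 V (g a)) m := by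
      intro m
      rw [hL1, inner_sub_right, inner_sum, cross7_norm, e7_norm, inner_e7r]
      have : ∀ a : Fin 3, ⟪cross7 V (e7 m), ⟪cross7 V (e7 m), g a⟫ • g a⟫
          = (cross7 V (g a)) m * (cross7 V (g a)) m := by
        intro a
        rw [real_inner_smul_right]
        have hsw : ⟪cross7 V (e7 m), g a⟫ = -((cross7 V (g a)) m) := by
          rw [inner_cross_swap, inner_e7r]
        rw [hsw]; ring
      rw [Finset.sum_congr rfl fun a _ => this a]; ring
    simp only [h1]
    rw [Finset.sum_sub_distrib, Finset.sum_sub_distrib, Finset.sum_comm]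
    have h2 : ∀ a : Fin 3, ∑ m, (cross7 V (g a)) m * (cross7 V (g a)) m = ⟪V,V⟫ - ⟪V, g a⟫ * ⟪V, g a⟫ := by
      intro a; rw [← inner7, cross7_norm, hgg a a, if_pos rfl]; ring
    rw [Finset.sum_congr rfl fun a _ => h2 a, Finset.sum_sub_distrib, hVV]
    have h3 : ∑ m : Fin 7, V m * V m = ⟪V,V⟫ := by rw [← inner7]
    rw [h3]
    simp only [Finset.sum_const, Finset.card_univ, Fintype.card_fin, nsmul_eq_mul]
    push_cast
    ring
  -- double cross sum
  have hDD : ∑ m, ⟪cross7 V (cross7 V (e7 m)), perpL W (e7 m)⟫ = -(4 * ⟪V, V⟫) := by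
    simp only [cross7_double, inner_sub_left, real_inner_smul_left, hπ0, mul_zero, zero_sub,
      Finset.sum_neg_distrib, ← Finset.mul_sum, htr]
    ring
  -- contraction helpers
  have hcon : ∀ (z w : E7), ∑ n, z n * ⟪cross7 V (e7 n), w⟫ = ⟪cross7 V z, w⟫ := by
    intro z w
    rw [sum_inner_L w (fun n => z n) (fun n => cross7 V (e7 n)), contract_r z V]
  have hcon2 : ∀ (w : E7) (c : Fin 7 → ℝ) (f : Fin 7 → E7),
      ∑ n, c n * ⟪cross7 V (f n), w⟫ = ⟪cross7 V (∑ n, c n • f n), w⟫ := by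
    intro w c f
    rw [sum_inner_L w c (fun n => cross7 V (f n))]
    congr 1
    show (∑ n, c n • crossL V (f n)) = crossL V (∑ n, c n • f n)
    rw [map_sum]
    exact Finset.sum_congr rfl fun n _ => (map_smul (crossL V) (c n) (f n)).symm
  have hπsum : ∀ (c : Fin 7 → ℝ) (f : Fin 7 → E7),
      ∑ n, c n • perpL W (f n) = perpL W (∑ n, c n • f n) := by
    intro c f
    rw [map_sum]
    exact Finset.sum_congr rfl fun n _ => (map_smul (perpL W) (c n) (f n)).symm
  have hKn : ∀ m, ∑ n, ⟪V, e7 n⟫ • cross7 (e7 m) (e7 n) = -cross7 V (e7 m) := by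
    intro m
    simp only [inner_e7r]
    rw [contract_r V (e7 m), cross7_skew (e7 m) V]
  have hKm : ∀ n, ∑ m, ⟪V, e7 m⟫ • cross7 (e7 m) (e7 n) = cross7 V (e7 n) := by
    intro n
    simp only [inner_e7r]
    exact contract_l V (e7 n)
  -- R
  have hR : ∑ m, ⟪cross7 V (perpL W (cross7 V (e7 m))), perpL W (e7 m)⟫
      = -(4 * ⟪V, V⟫) + ∑ a, ⟪cross7 V (g a), perpL W (cross7 V (g a))⟫ := by
    have h1 : ∀ m, ⟪cross7 V (perpL W (cross7 V (e7 m))), perpL W (e7 m)⟫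
        = -⟪cross7 V (perpL W (e7 m)), perpL W (cross7 V (e7 m))⟫ := by
      intro m
      rw [inner_cross_swap]
    have h2 : ∀ m, cross7 V (perpL W (e7 m)) = cross7 V (e7 m) - ∑ a, g a m • cross7 V (g a) := by
      intro m
      rw [hL1]
      show crossL V _ = _
      rw [map_sub, map_sum]
      congr 1
      exact Finset.sum_congr rfl fun a _ => by rw [map_smul, inner_e7l]; rfl
    simp only [h1, h2, inner_sub_left, sum_inner, real_inner_smul_left, neg_sub,
      Finset.sum_sub_distrib, hQ]
    rw [Finset.sum_comm]
    have h3 : ∀ a : Fin 3, ∑ m, g a m * ⟪cross7 V (g a), perpL W (cross7 V (e7 m))⟫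
        = ⟪cross7 V (g a), perpL W (cross7 V (g a))⟫ := by
      intro a
      rw [inner_L_sum (cross7 V (g a)) (perpL W) (fun m => g a m) (fun m => cross7 V (e7 m)),
        contract_r (g a) V]
    rw [Finset.sum_congr rfl fun a _ => h3 a]
    ring
  -- the eight double sums
  have hS1 : ∑ m, ∑ n, ⟪V, e7 n⟫ * ⟪cross7 V (e7 m), perpL W (cross7 (e7 m) (e7 n))⟫
      = -(4 * ⟪V, V⟫) := by
    have h : ∀ m, ∑ n, ⟪V, e7 n⟫ * ⟪cross7 V (e7 m), perpL W (cross7 (e7 m) (e7 n))⟫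
        = -⟪cross7 V (e7 m), perpL W (cross7 V (e7 m))⟫ := by
      intro m
      rw [inner_L_sum (cross7 V (e7 m)) (perpL W) (fun n => ⟪V, e7 n⟫)
        (fun n => cross7 (e7 m) (e7 n)), hKn m, map_neg, inner_neg_right]
    simp only [h, Finset.sum_neg_distrib, hQ]
  have hS2 : ∑ m, ∑ n, ⟪V, e7 m⟫ * ⟪cross7 V (e7 n), perpL W (cross7 (e7 m) (e7 n))⟫
      = 4 * ⟪V, V⟫ := by
    rw [Finset.sum_comm]
    have h : ∀ n, ∑ m, ⟪V, e7 m⟫ * ⟪cross7 V (e7 n), perpL W (cross7 (e7 m) (e7 n))⟫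
        = ⟪cross7 V (e7 n), perpL W (cross7 V (e7 n))⟫ := by
      intro n
      rw [inner_L_sum (cross7 V (e7 n)) (perpL W) (fun m => ⟪V, e7 m⟫)
        (fun m => cross7 (e7 m) (e7 n)), hKm n]
    simp only [h, hQ]
  have hS3 : ∑ m, ∑ n, ⟪V, cross7 (e7 m) (e7 n)⟫ * ⟪cross7 V (e7 n), perpL W (e7 m)⟫
      = -(4 * ⟪V, V⟫) := by
    have h : ∀ m, ∑ n, ⟪V, cross7 (e7 m) (e7 n)⟫ * ⟪cross7 V (e7 n), perpL W (e7 m)⟫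
        = ⟪cross7 V (cross7 V (e7 m)), perpL W (e7 m)⟫ := by
      intro m
      have h1 : ∀ n, ⟪V, cross7 (e7 m) (e7 n)⟫ = (cross7 V (e7 m)) n := by
        intro n; rw [inner_cross_left, inner_e7r]
      simp only [h1]
      exact hcon (cross7 V (e7 m)) (perpL W (e7 m))
    simp only [h, hDD]
  have hS4 : ∑ m, ∑ n, ⟪V, cross7 (e7 m) (e7 n)⟫ * ⟪cross7 V (e7 m), perpL W (e7 n)⟫
      = 4 * ⟪V, V⟫ := by
    rw [Finset.sum_comm]
    have h : ∀ n, ∑ m, ⟪V, cross7 (e7 m) (e7 n)⟫ * ⟪cross7 V (e7 m), perpL W (e7 n)⟫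
        = -⟪cross7 V (cross7 V (e7 n)), perpL W (e7 n)⟫ := by
      intro n
      have h1 : ∀ m, ⟪V, cross7 (e7 m) (e7 n)⟫ = -((cross7 V (e7 n)) m) := by
        intro m
        rw [cross7_skew (e7 m) (e7 n), inner_neg_right, inner_cross_left, inner_e7r]
      simp only [h1, neg_mul, Finset.sum_neg_distrib]
      rw [hcon (cross7 V (e7 n)) (perpL W (e7 n))]
    simp only [h, Finset.sum_neg_distrib, hDD]
    ring
  have hS5 : ∑ m, ∑ n, ⟪V, e7 n⟫ * ⟪cross7 V (cross7 (e7 m) (e7 n)), perpL W (e7 m)⟫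
      = 4 * ⟪V, V⟫ := by
    have h : ∀ m, ∑ n, ⟪V, e7 n⟫ * ⟪cross7 V (cross7 (e7 m) (e7 n)), perpL W (e7 m)⟫
        = -⟪cross7 V (cross7 V (e7 m)), perpL W (e7 m)⟫ := by
      intro m
      rw [hcon2 (perpL W (e7 m)) (fun n => ⟪V, e7 n⟫) (fun n => cross7 (e7 m) (e7 n)), hKn m,
        cross7_neg_right, inner_neg_left]
    simp only [h, Finset.sum_neg_distrib, hDD]
    ring
  have hS6 : ∑ m, ∑ n, ⟪V, e7 m⟫ * ⟪cross7 V (cross7 (e7 m) (e7 n)), perpL W (e7 n)⟫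
      = -(4 * ⟪V, V⟫) := by
    rw [Finset.sum_comm]
    have h : ∀ n, ∑ m, ⟪V, e7 m⟫ * ⟪cross7 V (cross7 (e7 m) (e7 n)), perpL W (e7 n)⟫
        = ⟪cross7 V (cross7 V (e7 n)), perpL W (e7 n)⟫ := by
      intro n
      rw [hcon2 (perpL W (e7 n)) (fun m => ⟪V, e7 m⟫) (fun m => cross7 (e7 m) (e7 n)), hKm n]
    simp only [h, hDD]
  have hS7 : ∑ m, ∑ n, ⟪V, e7 n⟫ * ⟪cross7 V (perpL W (cross7 (e7 m) (e7 n))), perpL W (e7 m)⟫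
      = 4 * ⟪V, V⟫ - ∑ a, ⟪cross7 V (g a), perpL W (cross7 V (g a))⟫ := by
    have h : ∀ m, ∑ n, ⟪V, e7 n⟫ * ⟪cross7 V (perpL W (cross7 (e7 m) (e7 n))), perpL W (e7 m)⟫
        = -⟪cross7 V (perpL W (cross7 V (e7 m))), perpL W (e7 m)⟫ := by
      intro m
      rw [hcon2 (perpL W (e7 m)) (fun n => ⟪V, e7 n⟫) (fun n => perpL W (cross7 (e7 m) (e7 n))),
        hπsum, hKn m, map_neg, cross7_neg_right, inner_neg_left]
    simp only [h, Finset.sum_neg_distrib, hR]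
    ring
  have hS8 : ∑ m, ∑ n, ⟪V, e7 m⟫ * ⟪cross7 V (perpL W (cross7 (e7 m) (e7 n))), perpL W (e7 n)⟫
      = -(4 * ⟪V, V⟫) + ∑ a, ⟪cross7 V (g a), perpL W (cross7 V (g a))⟫ := by
    rw [Finset.sum_comm]
    have h : ∀ n, ∑ m, ⟪V, e7 m⟫ * ⟪cross7 V (perpL W (cross7 (e7 m) (e7 n))), perpL W (e7 n)⟫
        = ⟪cross7 V (perpL W (cross7 V (e7 n))), perpL W (e7 n)⟫ := by
      intro n
      rw [hcon2 (perpL W (e7 n)) (fun m => ⟪V, e7 m⟫) (fun m => perpL W (cross7 (e7 m) (e7 n))),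
        hπsum, hKm n]
    simp only [h, hR]
  -- step 1 : rewrite the summand
  have hπX : ∀ u : E7, perpL W ((2:ℝ) • u - (3:ℝ) • perpL W u) = -perpL W u := by
    intro u
    rw [map_sub, map_smul, map_smul, perpL_idem]
    module
  have hVX : ∀ u : E7, ⟪V, (2:ℝ) • u - (3:ℝ) • perpL W u⟫ = 2 * ⟪V, u⟫ := by
    intro u
    rw [inner_sub_right, real_inner_smul_right, real_inner_smul_right, hπ0]
    ring
  have hcX : ∀ u : E7, cross7 V ((2:ℝ) • u - (3:ℝ) • perpL W u)
      = (2:ℝ) • cross7 V u - (3:ℝ) • cross7 V (perpL W u) := by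
    intro u
    show crossL V _ = _
    rw [map_sub, map_smul, map_smul]
    rfl
  have hXdef : ∀ m n, (2:ℝ) • projTan W (cross7 (e7 m) (e7 n)) - projPerp W (cross7 (e7 m) (e7 n))
      = (2:ℝ) • cross7 (e7 m) (e7 n) - (3:ℝ) • perpL W (cross7 (e7 m) (e7 n)) := by
    intro m n
    show (2:ℝ) • (cross7 (e7 m) (e7 n) - perpL W (cross7 (e7 m) (e7 n))) - perpL W (cross7 (e7 m) (e7 n)) = _
    module
  have step1 : ∀ m n, Tform V (projPerp W)
        ((2:ℝ) • projTan W (cross7 (e7 m) (e7 n)) - projPerp W (cross7 (e7 m) (e7 n)))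
        (e7 m) (e7 n)
      = -(⟪V, e7 n⟫ * ⟪cross7 V (e7 m), perpL W (cross7 (e7 m) (e7 n))⟫)
        + ⟪V, e7 m⟫ * ⟪cross7 V (e7 n), perpL W (cross7 (e7 m) (e7 n))⟫
        + (⟪V, cross7 (e7 m) (e7 n)⟫ * ⟪cross7 V (e7 n), perpL W (e7 m)⟫
           + ⟪V, cross7 (e7 m) (e7 n)⟫ * ⟪cross7 V (e7 n), perpL W (e7 m)⟫)
        - (⟪V, cross7 (e7 m) (e7 n)⟫ * ⟪cross7 V (e7 m), perpL W (e7 n)⟫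
           + ⟪V, cross7 (e7 m) (e7 n)⟫ * ⟪cross7 V (e7 m), perpL W (e7 n)⟫)
        - (⟪V, e7 n⟫ * ⟪cross7 V (cross7 (e7 m) (e7 n)), perpL W (e7 m)⟫
           + ⟪V, e7 n⟫ * ⟪cross7 V (cross7 (e7 m) (e7 n)), perpL W (e7 m)⟫)
        + (⟪V, e7 n⟫ * ⟪cross7 V (perpL W (cross7 (e7 m) (e7 n))), perpL W (e7 m)⟫
           + ⟪V, e7 n⟫ * ⟪cross7 V (perpL W (cross7 (e7 m) (e7 n))), perpL W (e7 m)⟫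
           + ⟪V, e7 n⟫ * ⟪cross7 V (perpL W (cross7 (e7 m) (e7 n))), perpL W (e7 m)⟫)
        + (⟪V, e7 m⟫ * ⟪cross7 V (cross7 (e7 m) (e7 n)), perpL W (e7 n)⟫
           + ⟪V, e7 m⟫ * ⟪cross7 V (cross7 (e7 m) (e7 n)), perpL W (e7 n)⟫)
        - (⟪V, e7 m⟫ * ⟪cross7 V (perpL W (cross7 (e7 m) (e7 n))), perpL W (e7 n)⟫
           + ⟪V, e7 m⟫ * ⟪cross7 V (perpL W (cross7 (e7 m) (e7 n))), perpL W (e7 n)⟫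
           + ⟪V, e7 m⟫ * ⟪cross7 V (perpL W (cross7 (e7 m) (e7 n))), perpL W (e7 n)⟫) := by
    intro m n
    rw [Tform, hXdef m n]
    simp only [projPerp_eq]
    rw [hπX, hVX, hcX]
    simp only [inner_neg_right, inner_sub_left, real_inner_smul_left]
    have hc : ⟪V, cross7 (e7 m) (e7 n)⟫ = ⟪cross7 V (e7 m), e7 n⟫ := inner_cross_left _ _ _
    ring
  -- assemble
  have key : ∑ m : Fin 7, ∑ n : Fin 7,
      Tform V (projPerp W)
        ((2:ℝ) • projTan W (cross7 (e7 m) (e7 n)) - projPerp W (cross7 (e7 m) (e7 n)))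
        (e7 m) (e7 n)
      = -6 * ∑ a, ⟪cross7 V (g a), perpL W (cross7 V (g a))⟫ := by
    rw [Finset.sum_congr rfl fun m _ => Finset.sum_congr rfl fun n _ => step1 m n]
    simp only [Finset.sum_add_distrib, Finset.sum_sub_distrib, Finset.sum_neg_distrib]
    rw [hS1, hS2, hS3, hS4, hS5, hS6, hS7, hS8]
    ring
  rw [key]
  have hnorm : ∀ a : Fin 3, ‖projPerp W (cross7 V (g a))‖ ^ 2
      = ⟪cross7 V (g a), perpL W (cross7 V (g a))⟫ := by
    intro a
    rw [projPerp_eq, ← real_inner_self_eq_norm_sq, perpL_sym, perpL_idem]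
  rw [Finset.sum_congr rfl fun a _ => hnorm a]
  ring
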